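/- Let L ≥ 1, h ≥ 1 and let W⁽¹⁾,…,W⁽ᴸ⁾ ∈ ℝ^{h×h} be weight matrices whose entries all satisfy |w⁽ᵖ⁾_{ij}| ≤ M for some M > 0 with hM > 1. Let x = x⁽¹⁾ ∈ ℝ^h with ‖x‖₂ ≤ M_x, define z⁽ᵖ⁾ = W⁽ᵖ⁾x⁽ᵖ⁾, x⁽ᵖ⁺¹⁾ = D⁽ᵖ⁾z⁽ᵖ⁾ with D⁽ᵖ⁾ = diag(𝟙[z⁽ᵖ⁾ ≥ 0]); set G⁽ᴸ⁾ = I_h and G⁽ᵖ⁾ = W⁽ᴸ⁾D⁽ᴸ⁻¹⁾W⁽ᴸ⁻¹⁾⋯W⁽ᵖ⁺¹⁾D⁽ᵖ⁾ for p < L; let F be the matrix whose transpose stacks vertically the blocks (G⁽ᵖ⁾)ᵀ ⊗ x⁽ᵖ⁾ and (G⁽ᵖ⁾)ᵀ for p = 1,…,L; let p ∈ ℝ^h be a probability vector, A = diag(p) − ppᵀ, and H = FᵀAF. Then ‖H‖₂ ≤ L·√2·M_x²·(hM)^{2L} + √2·(hM)²((hM)^{2L} − 1)/((hM)² − 1).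 -/

import Mathlib

open Matrix BigOperators

/-- The spectral norm (ℓ² operator norm) of a real matrix. -/
noncomputable def matrixSpectralNorm {m n : Type*} [Fintype m] [Fintype n] [DecidableEq n]
    (A : Matrix m n ℝ) : ℝ :=
  ‖LinearMap.toContinuousLinearMap (Matrix.toEuclideanLin A)‖

/-- The Euclidean norm of a real vector. -/
noncomputable def eNorm {n : Type*} [Fintype n] (x : n → ℝ) : ℝ :=
  Real.sqrt (∑ i, x i ^ 2)

lemma en2_nonneg {n : Type*} [Fintype n] (x : n → ℝ) : 0 ≤ ∑ i, x i ^ 2 :=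
  Finset.sum_nonneg fun _ _ => sq_nonneg _

lemma eNorm_nonneg {n : Type*} [Fintype n] (x : n → ℝ) : 0 ≤ eNorm x := Real.sqrt_nonneg _

lemma eNorm_sq {n : Type*} [Fintype n] (x : n → ℝ) : eNorm x ^ 2 = ∑ i, x i ^ 2 :=
  Real.sq_sqrt (en2_nonneg x)

lemma eNorm_eq_norm {n : Type*} [Fintype n] (x : n → ℝ) :
    eNorm x = ‖(WithLp.equiv 2 (n → ℝ)).symm x‖ := by
  rw [EuclideanSpace.norm_eq]
  simp [eNorm, sq_abs]

section helpers
variable {m n : Type*} [Fintype m] [Fintype n] [DecidableEq n]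

lemma spec_le (A : Matrix m n ℝ) (C : ℝ) (hC : 0 ≤ C)
    (hb : ∀ v, eNorm (A.mulVec v) ≤ C * eNorm v) : matrixSpectralNorm A ≤ C := by
  apply ContinuousLinearMap.opNorm_le_bound _ hC
  intro v
  have h1 : (LinearMap.toContinuousLinearMap (Matrix.toEuclideanLin A)) v
      = (WithLp.equiv 2 (m → ℝ)).symm (A.mulVec ((WithLp.equiv 2 (n → ℝ)) v)) := rfl
  have h2 : ‖v‖ = eNorm ((WithLp.equiv 2 (n → ℝ)) v) := by
    rw [eNorm_eq_norm]; simp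
  rw [h1, ← eNorm_eq_norm, h2]
  exact hb _

lemma spec_apply (A : Matrix m n ℝ) (v : n → ℝ) :
    eNorm (A.mulVec v) ≤ matrixSpectralNorm A * eNorm v := by
  have h := (LinearMap.toContinuousLinearMap (Matrix.toEuclideanLin A)).le_opNorm
    ((WithLp.equiv 2 (n → ℝ)).symm v)
  have h1 : (LinearMap.toContinuousLinearMap (Matrix.toEuclideanLin A))
      ((WithLp.equiv 2 (n → ℝ)).symm v) = (WithLp.equiv 2 (m → ℝ)).symm (A.mulVec v) := by
    simp [LinearMap.toContinuousLinearMap]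
  rw [h1, ← eNorm_eq_norm, ← eNorm_eq_norm] at h
  exact h

lemma spec_nonneg (A : Matrix m n ℝ) : 0 ≤ matrixSpectralNorm A := norm_nonneg _

end helpers

section helpers2
variable {m n : Type*} [Fintype m] [Fintype n] [DecidableEq n]

lemma spec_le_sq (A : Matrix m n ℝ) (C : ℝ) (hC : 0 ≤ C)
    (hb : ∀ v, ∑ i, (A.mulVec v) i ^ 2 ≤ C * ∑ j, v j ^ 2) :
    matrixSpectralNorm A ≤ Real.sqrt C := by
  apply spec_le _ _ (Real.sqrt_nonneg _)
  intro v
  rw [eNorm, eNorm, ← Real.sqrt_mul hC]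
  exact Real.sqrt_le_sqrt (hb v)

lemma spec_apply_sq (A : Matrix m n ℝ) (v : n → ℝ) :
    ∑ i, (A.mulVec v) i ^ 2 ≤ matrixSpectralNorm A ^ 2 * ∑ j, v j ^ 2 := by
  have h := spec_apply A v
  have h2 := pow_le_pow_left₀ (eNorm_nonneg _) h 2
  rw [mul_pow, eNorm_sq, eNorm_sq] at h2
  exact h2

/-- Row-wise Cauchy–Schwarz: squared norm of `A *ᵥ v` is at most Frobenius² times norm². -/
lemma mulVec_sq_le_frob (A : Matrix m n ℝ) (v : n → ℝ) :
    ∑ i, (A.mulVec v) i ^ 2 ≤ (∑ i, ∑ j, A i j ^ 2) * ∑ j, v j ^ 2 := by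
  rw [Finset.sum_mul]
  apply Finset.sum_le_sum
  intro i _
  exact Finset.sum_mul_sq_le_sq_mul_sq _ _ _

lemma spec_le_of_frob (A : Matrix m n ℝ) (C : ℝ) (hC : 0 ≤ C)
    (hf : ∑ i, ∑ j, A i j ^ 2 ≤ C ^ 2) : matrixSpectralNorm A ≤ C := by
  have := spec_le_sq A (C ^ 2) (by positivity) (fun v =>
    le_trans (mulVec_sq_le_frob A v) (mul_le_mul_of_nonneg_right hf (en2_nonneg v)))
  rwa [Real.sqrt_sq hC] at this

end helpers2

section helpers3
variable {m n : Type*} [Fintype m] [Fintype n] [DecidableEq n] [DecidableEq m]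

lemma spec_mul {k : Type*} [Fintype k] [DecidableEq k]
    (A : Matrix m n ℝ) (B : Matrix n k ℝ) :
    matrixSpectralNorm (A * B) ≤ matrixSpectralNorm A * matrixSpectralNorm B := by
  apply spec_le _ _ (mul_nonneg (spec_nonneg A) (spec_nonneg B))
  intro v
  rw [← Matrix.mulVec_mulVec]
  calc eNorm (A.mulVec (B.mulVec v)) ≤ matrixSpectralNorm A * eNorm (B.mulVec v) := spec_apply _ _
    _ ≤ matrixSpectralNorm A * (matrixSpectralNorm B * eNorm v) :=
        mul_le_mul_of_nonneg_left (spec_apply _ _) (spec_nonneg A)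
    _ = matrixSpectralNorm A * matrixSpectralNorm B * eNorm v := by ring

lemma spec_transpose (A : Matrix m n ℝ) : matrixSpectralNorm Aᵀ ≤ matrixSpectralNorm A := by
  apply spec_le _ _ (spec_nonneg A)
  intro w
  set u := Aᵀ.mulVec w with hu
  have h1 : ∑ j, u j ^ 2 = ∑ i, w i * (A.mulVec u) i := by
    have hcol : ∀ j, u j = ∑ i, A i j * w i := by
      intro j; simp [hu, Matrix.mulVec, dotProduct, Matrix.transpose_apply]
    calc ∑ j, u j ^ 2 = ∑ j, (∑ i, A i j * w i) * u j := by
          refine Finset.sum_congr rfl fun j _ => ?_; rw [pow_two, hcol j]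
      _ = ∑ j, ∑ i, A i j * w i * u j := by
          refine Finset.sum_congr rfl fun j _ => ?_; rw [Finset.sum_mul]
      _ = ∑ i, ∑ j, A i j * w i * u j := Finset.sum_comm
      _ = ∑ i, w i * (A.mulVec u) i := by
          refine Finset.sum_congr rfl fun i _ => ?_
          simp only [Matrix.mulVec, dotProduct, Finset.mul_sum]
          refine Finset.sum_congr rfl fun j _ => ?_; ring
  have key : (∑ j, u j ^ 2) ^ 2 ≤ (∑ i, w i ^ 2) * (matrixSpectralNorm A ^ 2 * ∑ j, u j ^ 2) :=
    calc (∑ j, u j ^ 2) ^ 2 = (∑ i, w i * (A.mulVec u) i) ^ 2 := by rw [h1]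
      _ ≤ (∑ i, w i ^ 2) * (∑ i, (A.mulVec u) i ^ 2) := Finset.sum_mul_sq_le_sq_mul_sq _ _ _
      _ ≤ (∑ i, w i ^ 2) * (matrixSpectralNorm A ^ 2 * ∑ j, u j ^ 2) :=
          mul_le_mul_of_nonneg_left (spec_apply_sq A u) (en2_nonneg w)
  have hsq : ∑ j, u j ^ 2 ≤ matrixSpectralNorm A ^ 2 * ∑ i, w i ^ 2 := by
    rcases eq_or_lt_of_le (en2_nonneg u) with h0 | h0
    · rw [← h0]; positivity
    · have k2 : (∑ j, u j ^ 2) * (∑ j, u j ^ 2)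
          ≤ (matrixSpectralNorm A ^ 2 * ∑ i, w i ^ 2) * (∑ j, u j ^ 2) := by nlinarith [key]
      exact le_of_mul_le_mul_right k2 h0
  have hs := Real.sqrt_le_sqrt hsq
  rw [← eNorm] at hs
  calc eNorm u ≤ Real.sqrt (matrixSpectralNorm A ^ 2 * ∑ i, w i ^ 2) := hs
    _ = matrixSpectralNorm A * eNorm w := by
        rw [Real.sqrt_mul (by positivity), Real.sqrt_sq (spec_nonneg A), eNorm]

end helpers3

/-- **Lemma 1.**  Spectral-norm bound for the G-term Hessian approximation
`H = Fᵀ A F` of an `L`-layer width-`h` fully connected ReLU network without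
bias terms, with each weight-matrix entry bounded by `M` (so `‖W‖₂ ≤ hM`).

Indexing convention: for `q = 0, …, L-1`, `W q` is the paper's `W⁽q⁺¹⁾`,
`xv q` is the paper's `x⁽q⁺¹⁾` (so `xv 0 = x`), `zv q` is the paper's `z⁽q⁺¹⁾`
and `Dm q` is the paper's `D⁽q⁺¹⁾`; for `q = 1, …, L`, `G q` is the paper's
`G⁽q⁾`, with `G L = I`.  `Ft` is the paper's `Fᵀ`, stacking the blocks
`(G⁽ᵖ⁾)ᵀ ⊗ x⁽ᵖ⁾` and `(G⁽ᵖ⁾)ᵀ` for `p = ℓ+1`, `ℓ : Fin L`. -/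
theorem spectral_norm_bound_of_G_term_hessian_entrywise
    (L h : ℕ) (hL : 1 ≤ L) (hh : 1 ≤ h)
    (W : ℕ → Matrix (Fin h) (Fin h) ℝ)
    (M : ℝ) (hM : 0 < M) (hhM : 1 < (h : ℝ) * M)
    (hWM : ∀ q < L, ∀ i j, |W q i j| ≤ M)
    (xv : ℕ → Fin h → ℝ)
    (zv : ℕ → Fin h → ℝ)
    (hz : ∀ q < L, zv q = (W q).mulVec (xv q))
    (Dm : ℕ → Matrix (Fin h) (Fin h) ℝ)
    (hD : ∀ q < L, Dm q = Matrix.diagonal fun i => if 0 ≤ zv q i then (1 : ℝ) else 0)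
    (hxrec : ∀ q < L, xv (q + 1) = (Dm q).mulVec (zv q))
    (G : ℕ → Matrix (Fin h) (Fin h) ℝ)
    (hGL : G L = 1)
    (hG : ∀ q, q + 1 < L → G (q + 1) = G (q + 2) * W (q + 1) * Dm q)
    (Ft : Matrix (Fin L × ((Fin h × Fin h) ⊕ Fin h)) (Fin h) ℝ)
    (hFt1 : ∀ (ℓ : Fin L) (i : Fin h) (a : Fin h) (j : Fin h),
      Ft (ℓ, Sum.inl (i, a)) j = (G (ℓ.1 + 1))ᵀ i j * xv ℓ.1 a)
    (hFt2 : ∀ (ℓ : Fin L) (i : Fin h) (j : Fin h),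
      Ft (ℓ, Sum.inr i) j = (G (ℓ.1 + 1))ᵀ i j)
    (pv : Fin h → ℝ) (hpv : ∀ j, 0 ≤ pv j) (hpsum : ∑ j, pv j = 1)
    (Mx : ℝ) (hx : eNorm (xv 0) ≤ Mx) :
    matrixSpectralNorm (Ft * (Matrix.diagonal pv - Matrix.vecMulVec pv pv) * Ftᵀ) ≤
      (L : ℝ) * Real.sqrt 2 * Mx ^ 2 * ((h : ℝ) * M) ^ (2 * L)
        + Real.sqrt 2 * (((h : ℝ) * M) ^ 2 * (((h : ℝ) * M) ^ (2 * L) - 1)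
            / (((h : ℝ) * M) ^ 2 - 1)) := by
  set a : ℝ := (h : ℝ) * M with ha
  have ha1 : 1 < a := hhM
  have ha0 : 0 < a := lt_trans one_pos ha1
  have haL : (1 : ℝ) ≤ a ^ (2 * L) := one_le_pow₀ ha1.le
  have ha2 : (0 : ℝ) < a ^ 2 - 1 := by nlinarith
  have hMx : 0 ≤ Mx := le_trans (eNorm_nonneg _) hx
  -- spectral bound for the weight matrices and their transposes
  have specW : ∀ q < L, matrixSpectralNorm (W q) ≤ a := by
    intro q hq
    apply spec_le_of_frob _ _ ha0.le
    calc ∑ i, ∑ j, W q i j ^ 2 ≤ ∑ i : Fin h, ∑ j : Fin h, M ^ 2 := by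
          refine Finset.sum_le_sum fun i _ => Finset.sum_le_sum fun j _ => ?_
          have := hWM q hq i j
          calc W q i j ^ 2 = |W q i j| ^ 2 := (sq_abs _).symm
            _ ≤ M ^ 2 := pow_le_pow_left₀ (abs_nonneg _) this 2
      _ = a ^ 2 := by
          simp [Finset.sum_const, ha]
          ring
  have specWT : ∀ q < L, matrixSpectralNorm (W q)ᵀ ≤ a := by
    intro q hq
    apply spec_le_of_frob _ _ ha0.le
    calc ∑ i, ∑ j, (W q)ᵀ i j ^ 2 ≤ ∑ i : Fin h, ∑ j : Fin h, M ^ 2 := by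
          refine Finset.sum_le_sum fun i _ => Finset.sum_le_sum fun j _ => ?_
          have := hWM q hq j i
          calc (W q)ᵀ i j ^ 2 = |W q j i| ^ 2 := by rw [Matrix.transpose_apply, sq_abs]
            _ ≤ M ^ 2 := pow_le_pow_left₀ (abs_nonneg _) this 2
      _ = a ^ 2 := by
          simp [Finset.sum_const, ha]
          ring
  have specD : ∀ q < L, matrixSpectralNorm (Dm q) ≤ 1 := by
    intro q hq
    have := spec_le_sq (Dm q) 1 one_pos.le (fun v => by
      rw [hD q hq, one_mul]
      refine Finset.sum_le_sum fun i _ => ?_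
      rw [Matrix.mulVec_diagonal]
      by_cases h0 : 0 ≤ zv q i <;> simp [h0, sq_nonneg])
    rwa [Real.sqrt_one] at this
  -- norm bound for the intermediate activations
  have hxb : ∀ q, q ≤ L → eNorm (xv q) ≤ Mx * a ^ q := by
    intro q
    induction q with
    | zero => intro _; simpa using hx
    | succ q ih =>
      intro hq1
      have hq : q < L := hq1
      have h1 : eNorm (xv (q + 1)) ≤ 1 * eNorm (zv q) := by
        rw [hxrec q hq]
        exact le_trans (spec_apply _ _)
          (mul_le_mul_of_nonneg_right (specD q hq) (eNorm_nonneg _))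
      have h2 : eNorm (zv q) ≤ a * (Mx * a ^ q) := by
        rw [hz q hq]
        calc eNorm ((W q).mulVec (xv q)) ≤ matrixSpectralNorm (W q) * eNorm (xv q) := spec_apply _ _
          _ ≤ a * (Mx * a ^ q) :=
            mul_le_mul (specW q hq) (ih hq.le) (eNorm_nonneg _) ha0.le
      calc eNorm (xv (q + 1)) ≤ 1 * eNorm (zv q) := h1
        _ = eNorm (zv q) := one_mul _
        _ ≤ a * (Mx * a ^ q) := h2
        _ = Mx * a ^ (q + 1) := by ring
  -- spectral bound for the transposed G matrices
  have spec_one : matrixSpectralNorm (1 : Matrix (Fin h) (Fin h) ℝ) ≤ 1 := by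
    apply spec_le _ _ one_pos.le
    intro v
    rw [Matrix.one_mulVec, one_mul]
  have hGb : ∀ k, k < L → matrixSpectralNorm ((G (L - k))ᵀ) ≤ a ^ k := by
    intro k
    induction k with
    | zero => intro _; simpa [hGL, Matrix.transpose_one] using spec_one
    | succ k ih =>
      intro hk1
      have hk : k < L := lt_trans (Nat.lt_succ_self k) hk1
      set q : ℕ := L - k - 2 with hqdef
      have e1 : q + 1 = L - (k + 1) := by omega
      have e2 : q + 2 = L - k := by omega
      have e3 : q + 1 < L := by omega
      have e4 : q < L := by omega
      have hGe : G (L - (k + 1)) = G (L - k) * W (q + 1) * Dm q := by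
        rw [← e1, ← e2, hG q e3]
      have hTr : (G (L - (k + 1)))ᵀ = (Dm q)ᵀ * ((W (q + 1))ᵀ * (G (L - k))ᵀ) := by
        rw [hGe, Matrix.transpose_mul, Matrix.transpose_mul]
      have hDT : matrixSpectralNorm (Dm q)ᵀ ≤ 1 := by
        rw [hD q e4, Matrix.diagonal_transpose, ← hD q e4]
        exact specD q e4
      calc matrixSpectralNorm ((G (L - (k + 1)))ᵀ)
          ≤ matrixSpectralNorm (Dm q)ᵀ * matrixSpectralNorm ((W (q + 1))ᵀ * (G (L - k))ᵀ) := by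
            rw [hTr]; exact spec_mul _ _
        _ ≤ matrixSpectralNorm (Dm q)ᵀ * (matrixSpectralNorm (W (q + 1))ᵀ * matrixSpectralNorm ((G (L - k))ᵀ)) :=
            mul_le_mul_of_nonneg_left (spec_mul _ _) (spec_nonneg _)
        _ ≤ 1 * (a * a ^ k) := by
            refine mul_le_mul hDT (mul_le_mul (specWT _ e3) (ih hk) (spec_nonneg _) ha0.le)
              (mul_nonneg (spec_nonneg _) (spec_nonneg _)) one_pos.le
        _ = a ^ (k + 1) := by ring
  have hGT : ∀ ℓ : Fin L, matrixSpectralNorm ((G (ℓ.1 + 1))ᵀ) ≤ a ^ (L - 1 - ℓ.1) := by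
    intro ℓ
    have hk : L - 1 - ℓ.1 < L := by omega
    have he : L - (L - 1 - ℓ.1) = ℓ.1 + 1 := by omega
    have := hGb (L - 1 - ℓ.1) hk
    rwa [he] at this
  -- squared bound for Ft
  set T : ℝ := (L : ℝ) * Mx ^ 2 * a ^ (2 * L) + a ^ 2 * (a ^ (2 * L) - 1) / (a ^ 2 - 1) with hT
  have hgeom0 : (0 : ℝ) ≤ (a ^ (2 * L) - 1) / (a ^ 2 - 1) :=
    div_nonneg (by linarith) ha2.le
  have hT0 : 0 ≤ T := by
    rw [hT]
    have h1 : (0:ℝ) ≤ (L : ℝ) * Mx ^ 2 * a ^ (2 * L) := by positivity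
    have h2 : (0:ℝ) ≤ a ^ 2 * (a ^ (2 * L) - 1) / (a ^ 2 - 1) :=
      div_nonneg (mul_nonneg (by positivity) (by linarith)) ha2.le
    linarith
  have hFtv : ∀ v : Fin h → ℝ, ∑ idx, (Ft.mulVec v) idx ^ 2 ≤ T * ∑ j, v j ^ 2 := by
    intro v
    have hsplit : ∑ idx, (Ft.mulVec v) idx ^ 2
        = ∑ ℓ : Fin L, ((∑ b, xv ℓ.1 b ^ 2) + 1)
            * ∑ i, (((G (ℓ.1 + 1))ᵀ).mulVec v) i ^ 2 := by
      rw [Fintype.sum_prod_type]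
      refine Finset.sum_congr rfl fun ℓ _ => ?_
      rw [Fintype.sum_sum_type]
      have hinl : ∀ p : Fin h × Fin h,
          (Ft.mulVec v) (ℓ, Sum.inl p) = xv ℓ.1 p.2 * (((G (ℓ.1 + 1))ᵀ).mulVec v) p.1 := by
        intro p
        simp only [Matrix.mulVec, dotProduct]
        rw [Finset.mul_sum]
        refine Finset.sum_congr rfl fun j _ => ?_
        rw [hFt1 ℓ p.1 p.2 j]; ring
      have hinr : ∀ i : Fin h,
          (Ft.mulVec v) (ℓ, Sum.inr i) = (((G (ℓ.1 + 1))ᵀ).mulVec v) i := by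
        intro i
        simp only [Matrix.mulVec, dotProduct]
        refine Finset.sum_congr rfl fun j _ => ?_
        rw [hFt2 ℓ i j]
      calc (∑ p : Fin h × Fin h, (Ft.mulVec v) (ℓ, Sum.inl p) ^ 2)
            + ∑ i, (Ft.mulVec v) (ℓ, Sum.inr i) ^ 2
          = (∑ p : Fin h × Fin h, (xv ℓ.1 p.2 * (((G (ℓ.1 + 1))ᵀ).mulVec v) p.1) ^ 2)
            + ∑ i, (((G (ℓ.1 + 1))ᵀ).mulVec v) i ^ 2 := by
            congr 1
            · exact Finset.sum_congr rfl fun p _ => by rw [hinl p]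
            · exact Finset.sum_congr rfl fun i _ => by rw [hinr i]
        _ = (∑ b, xv ℓ.1 b ^ 2) * (∑ i, (((G (ℓ.1 + 1))ᵀ).mulVec v) i ^ 2)
            + ∑ i, (((G (ℓ.1 + 1))ᵀ).mulVec v) i ^ 2 := by
            rw [Fintype.sum_prod_type]
            congr 1
            rw [Finset.sum_comm, Finset.sum_mul]
            refine Finset.sum_congr rfl fun b _ => ?_
            rw [Finset.mul_sum]
            refine Finset.sum_congr rfl fun i _ => ?_
            ring
        _ = ((∑ b, xv ℓ.1 b ^ 2) + 1) * ∑ i, (((G (ℓ.1 + 1))ᵀ).mulVec v) i ^ 2 := by ring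
    have hterm : ∀ ℓ : Fin L, ((∑ b, xv ℓ.1 b ^ 2) + 1)
        * ∑ i, (((G (ℓ.1 + 1))ᵀ).mulVec v) i ^ 2
        ≤ (Mx ^ 2 * a ^ (2 * L - 2) + a ^ (2 * (L - 1 - ℓ.1))) * ∑ j, v j ^ 2 := by
      intro ℓ
      have hxsq : ∑ b, xv ℓ.1 b ^ 2 ≤ Mx ^ 2 * a ^ (2 * ℓ.1) := by
        have h2 := pow_le_pow_left₀ (eNorm_nonneg _) (hxb ℓ.1 ℓ.2.le) 2
        rw [eNorm_sq] at h2
        calc ∑ b, xv ℓ.1 b ^ 2 ≤ (Mx * a ^ ℓ.1) ^ 2 := h2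
          _ = Mx ^ 2 * a ^ (2 * ℓ.1) := by rw [mul_pow, ← pow_mul, Nat.mul_comm]
      have hgsq : ∑ i, (((G (ℓ.1 + 1))ᵀ).mulVec v) i ^ 2
          ≤ a ^ (2 * (L - 1 - ℓ.1)) * ∑ j, v j ^ 2 := by
        have h1 := spec_apply_sq ((G (ℓ.1 + 1))ᵀ) v
        have h2 := pow_le_pow_left₀ (spec_nonneg _) (hGT ℓ) 2
        calc ∑ i, (((G (ℓ.1 + 1))ᵀ).mulVec v) i ^ 2
            ≤ matrixSpectralNorm ((G (ℓ.1 + 1))ᵀ) ^ 2 * ∑ j, v j ^ 2 := h1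
          _ ≤ (a ^ (L - 1 - ℓ.1)) ^ 2 * ∑ j, v j ^ 2 :=
              mul_le_mul_of_nonneg_right h2 (en2_nonneg v)
          _ = a ^ (2 * (L - 1 - ℓ.1)) * ∑ j, v j ^ 2 := by rw [← pow_mul, Nat.mul_comm]
      have hx1 : (0:ℝ) ≤ (∑ b, xv ℓ.1 b ^ 2) + 1 := by positivity
      have hpowmul : a ^ (2 * ℓ.1) * a ^ (2 * (L - 1 - ℓ.1)) = a ^ (2 * L - 2) := by
        rw [← pow_add]
        congr 1
        omega
      calc ((∑ b, xv ℓ.1 b ^ 2) + 1) * ∑ i, (((G (ℓ.1 + 1))ᵀ).mulVec v) i ^ 2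
          ≤ ((Mx ^ 2 * a ^ (2 * ℓ.1)) + 1) * (a ^ (2 * (L - 1 - ℓ.1)) * ∑ j, v j ^ 2) :=
            mul_le_mul (by linarith) hgsq (en2_nonneg _) (by positivity)
        _ = (Mx ^ 2 * (a ^ (2 * ℓ.1) * a ^ (2 * (L - 1 - ℓ.1))) + a ^ (2 * (L - 1 - ℓ.1)))
            * ∑ j, v j ^ 2 := by ring
        _ = (Mx ^ 2 * a ^ (2 * L - 2) + a ^ (2 * (L - 1 - ℓ.1))) * ∑ j, v j ^ 2 := by
            rw [hpowmul]
    have hgeom : ∑ ℓ : Fin L, a ^ (2 * (L - 1 - ℓ.1)) = (a ^ (2 * L) - 1) / (a ^ 2 - 1) := by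
      rw [Fin.sum_univ_eq_sum_range (fun i => a ^ (2 * (L - 1 - i))) L]
      have hrefl := Finset.sum_range_reflect (fun i => a ^ (2 * i)) L
      have hstep : ∀ i ∈ Finset.range L, a ^ (2 * (L - 1 - i)) = (fun i => a ^ (2 * i)) (L - 1 - i) := by
        intro i _; rfl
      rw [Finset.sum_congr rfl hstep, hrefl]
      have : ∀ i ∈ Finset.range L, a ^ (2 * i) = (a ^ 2) ^ i := by
        intro i _; rw [← pow_mul]
      rw [Finset.sum_congr rfl this, geom_sum_eq (by nlinarith : a ^ 2 ≠ 1), ← pow_mul,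
        Nat.mul_comm]
    calc ∑ idx, (Ft.mulVec v) idx ^ 2
        = ∑ ℓ : Fin L, ((∑ b, xv ℓ.1 b ^ 2) + 1)
            * ∑ i, (((G (ℓ.1 + 1))ᵀ).mulVec v) i ^ 2 := hsplit
      _ ≤ ∑ ℓ : Fin L, (Mx ^ 2 * a ^ (2 * L - 2) + a ^ (2 * (L - 1 - ℓ.1))) * ∑ j, v j ^ 2 :=
          Finset.sum_le_sum fun ℓ _ => hterm ℓ
      _ = ((L : ℝ) * (Mx ^ 2 * a ^ (2 * L - 2)) + (a ^ (2 * L) - 1) / (a ^ 2 - 1))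
          * ∑ j, v j ^ 2 := by
          rw [← Finset.sum_mul]
          congr 1
          rw [Finset.sum_add_distrib, hgeom, Finset.sum_const, Finset.card_univ,
            Fintype.card_fin, nsmul_eq_mul]
      _ ≤ T * ∑ j, v j ^ 2 := by
          refine mul_le_mul_of_nonneg_right ?_ (en2_nonneg v)
          rw [hT]
          have hp1 : a ^ (2 * L - 2) ≤ a ^ (2 * L) :=
            pow_le_pow_right₀ ha1.le (by omega)
          have hp2 : (a ^ (2 * L) - 1) / (a ^ 2 - 1)
              ≤ a ^ 2 * (a ^ (2 * L) - 1) / (a ^ 2 - 1) := by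
            rw [mul_div_assoc]
            nlinarith [hgeom0]
          have hp3 : (L : ℝ) * (Mx ^ 2 * a ^ (2 * L - 2)) ≤ (L : ℝ) * Mx ^ 2 * a ^ (2 * L) := by
            rw [mul_assoc]
            refine mul_le_mul_of_nonneg_left ?_ (Nat.cast_nonneg L)
            exact mul_le_mul_of_nonneg_left hp1 (sq_nonneg Mx)
          linarith
  have specFt : matrixSpectralNorm Ft ≤ Real.sqrt T := spec_le_sq Ft T hT0 hFtv
  have specFtT : matrixSpectralNorm Ftᵀ ≤ Real.sqrt T := le_trans (spec_transpose Ft) specFt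
  -- spectral bound for the covariance-type matrix
  have specA : matrixSpectralNorm (Matrix.diagonal pv - Matrix.vecMulVec pv pv) ≤ Real.sqrt 2 := by
    apply spec_le_of_frob _ _ (Real.sqrt_nonneg 2)
    rw [Real.sq_sqrt (by norm_num : (0:ℝ) ≤ 2)]
    have hent : ∀ i j, ((Matrix.diagonal pv - Matrix.vecMulVec pv pv) i j) ^ 2
        ≤ (if j = i then pv i ^ 2 else 0) + pv i ^ 2 * pv j ^ 2 := by
      intro i j
      rw [Matrix.sub_apply, Matrix.vecMulVec_apply, Matrix.diagonal_apply]
      by_cases hij : i = j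
      · subst hij
        simp only [if_pos rfl]
        show (pv i - pv i * pv i) ^ 2 ≤ pv i ^ 2 + pv i ^ 2 * pv i ^ 2
        have h3 : 0 ≤ pv i * pv i * pv i := mul_nonneg (mul_nonneg (hpv i) (hpv i)) (hpv i)
        have e : (pv i - pv i * pv i) ^ 2
            = pv i ^ 2 - 2 * (pv i * pv i * pv i) + pv i ^ 2 * pv i ^ 2 := by ring
        rw [e]
        linarith
      · have hij' : ¬ j = i := fun hc => hij hc.symm
        simp only [if_neg hij, if_neg hij']
        rw [zero_sub, neg_sq, zero_add, mul_pow]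
    have hs : ∑ i, pv i ^ 2 ≤ 1 := by
      have := Finset.sum_sq_le_sq_sum_of_nonneg (s := Finset.univ) (f := pv)
        (fun i _ => hpv i)
      rwa [hpsum, one_pow] at this
    calc ∑ i, ∑ j, ((Matrix.diagonal pv - Matrix.vecMulVec pv pv) i j) ^ 2
        ≤ ∑ i, ∑ j, ((if j = i then pv i ^ 2 else 0) + pv i ^ 2 * pv j ^ 2) :=
          Finset.sum_le_sum fun i _ => Finset.sum_le_sum fun j _ => hent i j
      _ = (∑ i, pv i ^ 2) + (∑ i, pv i ^ 2) * ∑ j, pv j ^ 2 := by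
          rw [Finset.sum_congr rfl fun i (_ : i ∈ Finset.univ) => Finset.sum_add_distrib,
            Finset.sum_add_distrib]
          congr 1
          · exact Finset.sum_congr rfl fun i _ => by simp
          · rw [Finset.sum_mul]
            exact Finset.sum_congr rfl fun i _ => by rw [Finset.mul_sum]
      _ ≤ 2 := by
          have hs0 : 0 ≤ ∑ i, pv i ^ 2 :=
            Finset.sum_nonneg fun i _ => sq_nonneg (pv i)
          have h2 : (∑ i, pv i ^ 2) * ∑ j, pv j ^ 2 ≤ 1 := mul_le_one₀ hs hs0 hs
          linarith
  -- assemble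
  calc matrixSpectralNorm (Ft * (Matrix.diagonal pv - Matrix.vecMulVec pv pv) * Ftᵀ)
      ≤ matrixSpectralNorm (Ft * (Matrix.diagonal pv - Matrix.vecMulVec pv pv)) * matrixSpectralNorm Ftᵀ :=
        spec_mul _ _
    _ ≤ matrixSpectralNorm Ft * matrixSpectralNorm (Matrix.diagonal pv - Matrix.vecMulVec pv pv)
        * matrixSpectralNorm Ftᵀ :=
        mul_le_mul_of_nonneg_right (spec_mul _ _) (spec_nonneg _)
    _ ≤ Real.sqrt T * Real.sqrt 2 * Real.sqrt T := by
        refine mul_le_mul (mul_le_mul specFt specA (spec_nonneg _) (Real.sqrt_nonneg _))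
          specFtT (spec_nonneg _) (by positivity)
    _ = Real.sqrt 2 * T := by
        rw [mul_comm (Real.sqrt T) (Real.sqrt 2), mul_assoc, Real.mul_self_sqrt hT0]
    _ = (L : ℝ) * Real.sqrt 2 * Mx ^ 2 * a ^ (2 * L)
        + Real.sqrt 2 * (a ^ 2 * (a ^ (2 * L) - 1) / (a ^ 2 - 1)) := by
        rw [hT]; ring
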